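/- Exactness of the 3D polynomial sequence: ℝ → S_K →^grad U_K →^curl BDM₁(K) →^div P₀ → 0, where S_K is the 3D serendipity space of order 2 and U_K = P_{1,1,1}(ℝ³) + span{y²z,yz²,y²,z²}×span{x²z,xz²,x²,z²}×span{x²y,xy²,x²,y²}. -/
import Mathlib
set_option maxHeartbeats 2000000

/-- partial derivatives of a function of three real variables -/
noncomputable def pd1 (f : ℝ → ℝ → ℝ → ℝ) (x y z : ℝ) : ℝ := deriv (fun t => f t y z) x
noncomputable def pd2 (f : ℝ → ℝ → ℝ → ℝ) (x y z : ℝ) : ℝ := deriv (fun t => f x t z) y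
noncomputable def pd3 (f : ℝ → ℝ → ℝ → ℝ) (x y z : ℝ) : ℝ := deriv (fun t => f x y t) z

/-- the divergence of a 3D vector field -/
noncomputable def dv3 (q : ℝ → ℝ → ℝ → (Fin 3 → ℝ)) : ℝ → ℝ → ℝ → ℝ :=
  fun x y z => pd1 (fun a b c => q a b c 0) x y z + pd2 (fun a b c => q a b c 1) x y z
    + pd3 (fun a b c => q a b c 2) x y z

/-- the curl of a 3D vector field -/
noncomputable def curl3 (u : ℝ → ℝ → ℝ → (Fin 3 → ℝ)) : ℝ → ℝ → ℝ → (Fin 3 → ℝ) :=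
  fun x y z =>
    ![pd2 (fun a b c => u a b c 2) x y z - pd3 (fun a b c => u a b c 1) x y z,
      pd3 (fun a b c => u a b c 0) x y z - pd1 (fun a b c => u a b c 2) x y z,
      pd1 (fun a b c => u a b c 1) x y z - pd2 (fun a b c => u a b c 0) x y z]

/-- The 3D `BDM₁` space
`P₁(K,ℝ³) + curl span{(0,0,xy²),(0,0,x²y),(y²z,0,0),(yz²,0,0),(0,xz²,0),(0,x²z,0)}`,
where `curl(0,0,xy²) = (2xy,−y²,0)`, `curl(0,0,x²y) = (x²,−2xy,0)`,
`curl(y²z,0,0) = (0,y²,−2yz)`, `curl(yz²,0,0) = (0,2yz,−z²)`,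
`curl(0,xz²,0) = (−2xz,0,z²)`, `curl(0,x²z,0) = (−x²,0,2xz)`. -/
def BDM13 : Set (ℝ → ℝ → ℝ → (Fin 3 → ℝ)) :=
  {q | ∃ a : Fin 3 → Fin 4 → ℝ, ∃ c1 c2 c3 c4 c5 c6 : ℝ, ∀ x y z : ℝ,
    q x y z =
      ![a 0 0 + a 0 1 * x + a 0 2 * y + a 0 3 * z
          + c1 * (2 * x * y) + c2 * x ^ 2 - c5 * (2 * x * z) - c6 * x ^ 2,
        a 1 0 + a 1 1 * x + a 1 2 * y + a 1 3 * z
          - c1 * y ^ 2 - c2 * (2 * x * y) + c3 * y ^ 2 + c4 * (2 * y * z),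
        a 2 0 + a 2 1 * x + a 2 2 * y + a 2 3 * z
          - c3 * (2 * y * z) - c4 * z ^ 2 + c5 * z ^ 2 + c6 * (2 * x * z)]}

/-- The space `U_K = P_{1,1,1}(ℝ³)³ +
span{y²z,yz²,y²,z²} × span{x²z,xz²,x²,z²} × span{x²y,xy²,x²,y²}`. -/
def UK : Set (ℝ → ℝ → ℝ → (Fin 3 → ℝ)) :=
  {u | ∃ b : Fin 3 → Fin 8 → ℝ, ∃ α1 α2 α3 α4 β1 β2 β3 β4 γ1 γ2 γ3 γ4 : ℝ, ∀ x y z : ℝ,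
    u x y z =
      ![b 0 0 + b 0 1 * x + b 0 2 * y + b 0 3 * z + b 0 4 * x * y + b 0 5 * x * z
          + b 0 6 * y * z + b 0 7 * x * y * z
          + α1 * y ^ 2 * z + α2 * y * z ^ 2 + α3 * y ^ 2 + α4 * z ^ 2,
        b 1 0 + b 1 1 * x + b 1 2 * y + b 1 3 * z + b 1 4 * x * y + b 1 5 * x * z
          + b 1 6 * y * z + b 1 7 * x * y * z
          + β1 * x ^ 2 * z + β2 * x * z ^ 2 + β3 * x ^ 2 + β4 * z ^ 2,
        b 2 0 + b 2 1 * x + b 2 2 * y + b 2 3 * z + b 2 4 * x * y + b 2 5 * x * z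
          + b 2 6 * y * z + b 2 7 * x * y * z
          + γ1 * x ^ 2 * y + γ2 * x * y ^ 2 + γ3 * x ^ 2 + γ4 * y ^ 2]}

/-- the gradient of a scalar function of three variables -/
noncomputable def grad3 (s : ℝ → ℝ → ℝ → ℝ) : ℝ → ℝ → ℝ → (Fin 3 → ℝ) :=
  fun x y z => ![pd1 s x y z, pd2 s x y z, pd3 s x y z]

/-- The 3D serendipity space of order 2:
`S_K = P₂ + span{x²y,x²z,xy²,xz²,y²z,yz²,xyz,x²yz,xy²z,xyz²}`. -/
def SK3 : Set (ℝ → ℝ → ℝ → ℝ) :=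
  {s | ∃ c : Fin 20 → ℝ, ∀ x y z : ℝ,
    s x y z = c 0 + c 1 * x + c 2 * y + c 3 * z + c 4 * x ^ 2 + c 5 * y ^ 2 + c 6 * z ^ 2
      + c 7 * x * y + c 8 * x * z + c 9 * y * z
      + c 10 * x ^ 2 * y + c 11 * x ^ 2 * z + c 12 * x * y ^ 2 + c 13 * x * z ^ 2
      + c 14 * y ^ 2 * z + c 15 * y * z ^ 2 + c 16 * x * y * z
      + c 17 * x ^ 2 * y * z + c 18 * x * y ^ 2 * z + c 19 * x * y * z ^ 2}

private lemma dq' (A B C v : ℝ) :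
    deriv (fun t : ℝ => A + B * t + C * t ^ 2) v = B + 2 * C * v := by
  have h1 : HasDerivAt (fun t : ℝ => A + B * t + C * t ^ 2)
      (0 + B * 1 + C * (↑2 * v ^ 1)) v :=
    (((hasDerivAt_const v A).add ((hasDerivAt_id v).const_mul B)).add
      ((hasDerivAt_pow 2 v).const_mul C))
  rw [h1.deriv]; ring

private lemma pd1_eq {f : ℝ → ℝ → ℝ → ℝ} {x y z A B C : ℝ}
    (h : ∀ t, f t y z = A + B * t + C * t ^ 2) : pd1 f x y z = B + 2 * C * x := by
  unfold pd1
  rw [show (fun t => f t y z) = fun t => A + B * t + C * t ^ 2 from funext h, dq']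

private lemma pd2_eq {f : ℝ → ℝ → ℝ → ℝ} {x y z A B C : ℝ}
    (h : ∀ t, f x t z = A + B * t + C * t ^ 2) : pd2 f x y z = B + 2 * C * y := by
  unfold pd2
  rw [show (fun t => f x t z) = fun t => A + B * t + C * t ^ 2 from funext h, dq']

private lemma pd3_eq {f : ℝ → ℝ → ℝ → ℝ} {x y z A B C : ℝ}
    (h : ∀ t, f x y t = A + B * t + C * t ^ 2) : pd3 f x y z = B + 2 * C * z := by
  unfold pd3
  rw [show (fun t => f x y t) = fun t => A + B * t + C * t ^ 2 from funext h, dq']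

private lemma SKgrad {c0 c1 c2 c3 c4 c5 c6 c7 c8 c9 c10 c11 c12 c13 c14 c15 c16 c17 c18 c19 : ℝ} {s : ℝ → ℝ → ℝ → ℝ}
    (hs : ∀ x y z : ℝ, s x y z = c0 + c1 * x + c2 * y + c3 * z + c4 * x ^ 2 + c5 * y ^ 2 + c6 * z ^ 2 + c7 * x * y + c8 * x * z + c9 * y * z + c10 * x ^ 2 * y + c11 * x ^ 2 * z + c12 * x * y ^ 2 + c13 * x * z ^ 2 + c14 * y ^ 2 * z + c15 * y * z ^ 2 + c16 * x * y * z + c17 * x ^ 2 * y * z + c18 * x * y ^ 2 * z + c19 * x * y * z ^ 2) (x y z : ℝ) :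
    grad3 s x y z = ![(c1 + c12 * y ^ 2 + c13 * z ^ 2 + c16 * y * z + c18 * y ^ 2 * z + c19 * y * z ^ 2 + c7 * y + c8 * z) + 2 * (c10 * y + c11 * z + c17 * y * z + c4) * x, (c10 * x ^ 2 + c15 * z ^ 2 + c16 * x * z + c17 * x ^ 2 * z + c19 * x * z ^ 2 + c2 + c7 * x + c9 * z) + 2 * (c12 * x + c14 * z + c18 * x * z + c5) * y, (c11 * x ^ 2 + c14 * y ^ 2 + c16 * x * y + c17 * x ^ 2 * y + c18 * x * y ^ 2 + c3 + c8 * x + c9 * y) + 2 * (c13 * x + c15 * y + c19 * x * y + c6) * z] := by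
  have E1 : pd1 s x y z = (c1 + c12 * y ^ 2 + c13 * z ^ 2 + c16 * y * z + c18 * y ^ 2 * z + c19 * y * z ^ 2 + c7 * y + c8 * z) + 2 * (c10 * y + c11 * z + c17 * y * z + c4) * x :=
    pd1_eq (A := (c0 + c14 * y ^ 2 * z + c15 * y * z ^ 2 + c2 * y + c3 * z + c5 * y ^ 2 + c6 * z ^ 2 + c9 * y * z)) (fun t => by rw [hs]; ring)
  have E2 : pd2 s x y z = (c10 * x ^ 2 + c15 * z ^ 2 + c16 * x * z + c17 * x ^ 2 * z + c19 * x * z ^ 2 + c2 + c7 * x + c9 * z) + 2 * (c12 * x + c14 * z + c18 * x * z + c5) * y :=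
    pd2_eq (A := (c0 + c1 * x + c11 * x ^ 2 * z + c13 * x * z ^ 2 + c3 * z + c4 * x ^ 2 + c6 * z ^ 2 + c8 * x * z)) (fun t => by rw [hs]; ring)
  have E3 : pd3 s x y z = (c11 * x ^ 2 + c14 * y ^ 2 + c16 * x * y + c17 * x ^ 2 * y + c18 * x * y ^ 2 + c3 + c8 * x + c9 * y) + 2 * (c13 * x + c15 * y + c19 * x * y + c6) * z :=
    pd3_eq (A := (c0 + c1 * x + c10 * x ^ 2 * y + c12 * x * y ^ 2 + c2 * y + c4 * x ^ 2 + c5 * y ^ 2 + c7 * x * y)) (fun t => by rw [hs]; ring)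
  unfold grad3; rw [E1, E2, E3]

private lemma UKcurl {b00 b01 b02 b03 b04 b05 b06 b07 b10 b11 b12 b13 b14 b15 b16 b17 b20 b21 b22 b23 b24 b25 b26 b27 al1 al2 al3 al4 be1 be2 be3 be4 ga1 ga2 ga3 ga4 : ℝ} {u : ℝ → ℝ → ℝ → (Fin 3 → ℝ)}
    (hu : ∀ x y z : ℝ, u x y z = ![b00 + b01 * x + b02 * y + b03 * z + b04 * x * y + b05 * x * z + b06 * y * z + b07 * x * y * z + al1 * y ^ 2 * z + al2 * y * z ^ 2 + al3 * y ^ 2 + al4 * z ^ 2, b10 + b11 * x + b12 * y + b13 * z + b14 * x * y + b15 * x * z + b16 * y * z + b17 * x * y * z + be1 * x ^ 2 * z + be2 * x * z ^ 2 + be3 * x ^ 2 + be4 * z ^ 2, b20 + b21 * x + b22 * y + b23 * z + b24 * x * y + b25 * x * z + b26 * y * z + b27 * x * y * z + ga1 * x ^ 2 * y + ga2 * x * y ^ 2 + ga3 * x ^ 2 + ga4 * y ^ 2]) (x y z : ℝ) :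
    curl3 u x y z = ![((b22 + b24 * x + b26 * z + b27 * x * z + ga1 * x ^ 2) + 2 * (ga2 * x + ga4) * y) - ((b13 + b15 * x + b16 * y + b17 * x * y + be1 * x ^ 2) + 2 * (be2 * x + be4) * z), ((al1 * y ^ 2 + b03 + b05 * x + b06 * y + b07 * x * y) + 2 * (al2 * y + al4) * z) - ((b21 + b24 * y + b25 * z + b27 * y * z + ga2 * y ^ 2) + 2 * (ga1 * y + ga3) * x), ((b11 + b14 * y + b15 * z + b17 * y * z + be2 * z ^ 2) + 2 * (be1 * z + be3) * x) - ((al2 * z ^ 2 + b02 + b04 * x + b06 * z + b07 * x * z) + 2 * (al1 * z + al3) * y)] := by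
  have E1 : pd2 (fun a b c => u a b c 2) x y z = (b22 + b24 * x + b26 * z + b27 * x * z + ga1 * x ^ 2) + 2 * (ga2 * x + ga4) * y :=
    pd2_eq (A := (b20 + b21 * x + b23 * z + b25 * x * z + ga3 * x ^ 2)) (fun t => by simp only [hu, Matrix.cons_val_zero, Matrix.cons_val_one, Matrix.head_cons, Matrix.cons_val_two, Matrix.tail_cons]; ring)
  have E2 : pd3 (fun a b c => u a b c 1) x y z = (b13 + b15 * x + b16 * y + b17 * x * y + be1 * x ^ 2) + 2 * (be2 * x + be4) * z :=
    pd3_eq (A := (b10 + b11 * x + b12 * y + b14 * x * y + be3 * x ^ 2)) (fun t => by simp only [hu, Matrix.cons_val_zero, Matrix.cons_val_one, Matrix.head_cons, Matrix.cons_val_two, Matrix.tail_cons]; ring)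
  have E3 : pd3 (fun a b c => u a b c 0) x y z = (al1 * y ^ 2 + b03 + b05 * x + b06 * y + b07 * x * y) + 2 * (al2 * y + al4) * z :=
    pd3_eq (A := (al3 * y ^ 2 + b00 + b01 * x + b02 * y + b04 * x * y)) (fun t => by simp only [hu, Matrix.cons_val_zero, Matrix.cons_val_one, Matrix.head_cons, Matrix.cons_val_two, Matrix.tail_cons]; ring)
  have E4 : pd1 (fun a b c => u a b c 2) x y z = (b21 + b24 * y + b25 * z + b27 * y * z + ga2 * y ^ 2) + 2 * (ga1 * y + ga3) * x :=
    pd1_eq (A := (b20 + b22 * y + b23 * z + b26 * y * z + ga4 * y ^ 2)) (fun t => by simp only [hu, Matrix.cons_val_zero, Matrix.cons_val_one, Matrix.head_cons, Matrix.cons_val_two, Matrix.tail_cons]; ring)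
  have E5 : pd1 (fun a b c => u a b c 1) x y z = (b11 + b14 * y + b15 * z + b17 * y * z + be2 * z ^ 2) + 2 * (be1 * z + be3) * x :=
    pd1_eq (A := (b10 + b12 * y + b13 * z + b16 * y * z + be4 * z ^ 2)) (fun t => by simp only [hu, Matrix.cons_val_zero, Matrix.cons_val_one, Matrix.head_cons, Matrix.cons_val_two, Matrix.tail_cons]; ring)
  have E6 : pd2 (fun a b c => u a b c 0) x y z = (al2 * z ^ 2 + b02 + b04 * x + b06 * z + b07 * x * z) + 2 * (al1 * z + al3) * y :=
    pd2_eq (A := (al4 * z ^ 2 + b00 + b01 * x + b03 * z + b05 * x * z)) (fun t => by simp only [hu, Matrix.cons_val_zero, Matrix.cons_val_one, Matrix.head_cons, Matrix.cons_val_two, Matrix.tail_cons]; ring)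
  unfold curl3; rw [E1, E2, E3, E4, E5, E6]

private lemma BDMdiv {p00 p01 p02 p03 p10 p11 p12 p13 p20 p21 p22 p23 d1 d2 d3 d4 d5 d6 : ℝ} {q : ℝ → ℝ → ℝ → (Fin 3 → ℝ)}
    (hq : ∀ x y z : ℝ, q x y z = ![p00 + p01 * x + p02 * y + p03 * z + d1 * (2 * x * y) + d2 * x ^ 2 - d5 * (2 * x * z) - d6 * x ^ 2, p10 + p11 * x + p12 * y + p13 * z - d1 * y ^ 2 - d2 * (2 * x * y) + d3 * y ^ 2 + d4 * (2 * y * z), p20 + p21 * x + p22 * y + p23 * z - d3 * (2 * y * z) - d4 * z ^ 2 + d5 * z ^ 2 + d6 * (2 * x * z)]) (x y z : ℝ) :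
    dv3 q x y z = p01 + p12 + p23 := by
  have E1 : pd1 (fun a b c => q a b c 0) x y z = (2 * d1 * y - 2 * d5 * z + p01) + 2 * (d2 - d6) * x :=
    pd1_eq (A := (p00 + p02 * y + p03 * z)) (fun t => by simp only [hq, Matrix.cons_val_zero, Matrix.cons_val_one, Matrix.head_cons, Matrix.cons_val_two, Matrix.tail_cons]; ring)
  have E2 : pd2 (fun a b c => q a b c 1) x y z = (-2 * d2 * x + 2 * d4 * z + p12) + 2 * (-d1 + d3) * y :=
    pd2_eq (A := (p10 + p11 * x + p13 * z)) (fun t => by simp only [hq, Matrix.cons_val_zero, Matrix.cons_val_one, Matrix.head_cons, Matrix.cons_val_two, Matrix.tail_cons]; ring)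
  have E3 : pd3 (fun a b c => q a b c 2) x y z = (-2 * d3 * y + 2 * d6 * x + p23) + 2 * (-d4 + d5) * z :=
    pd3_eq (A := (p20 + p21 * x + p22 * y)) (fun t => by simp only [hq, Matrix.cons_val_zero, Matrix.cons_val_one, Matrix.head_cons, Matrix.cons_val_two, Matrix.tail_cons]; ring)
  unfold dv3; rw [E1, E2, E3]; ring

/-- Exactness of the 3D polynomial sequence
`ℝ → S_K → U_K → BDM₁(K) → P₀ → 0`:
the kernel of `grad` on `S_K` is the constants, the image of `grad` is the
kernel of `curl` in `U_K`, the image of `curl` is the kernel of `div` in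
`BDM₁`, and `div` maps `BDM₁` onto `P₀`. -/
theorem stmt_11 :
    ({s ∈ SK3 | grad3 s = fun _ _ _ => 0} = {s | ∃ c : ℝ, s = fun _ _ _ => c}) ∧
    ({u | ∃ s ∈ SK3, u = grad3 s} = {u ∈ UK | curl3 u = fun _ _ _ => 0}) ∧
    ({w | ∃ u ∈ UK, w = curl3 u} = {w ∈ BDM13 | dv3 w = fun _ _ _ => 0}) ∧
    ({g : ℝ → ℝ → ℝ → ℝ | ∃ w ∈ BDM13, g = dv3 w} = {g | ∃ c : ℝ, g = fun _ _ _ => c}) := by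
  refine ⟨?_, ?_, ?_, ?_⟩
  · ext s
    simp only [Set.mem_setOf_eq, Set.mem_sep_iff, SK3]
    constructor
    · rintro ⟨⟨c, hc⟩, hg⟩
      have hg1 : ∀ x y z : ℝ, ((c 1) + (c 12) * y ^ 2 + (c 13) * z ^ 2 + (c 16) * y * z + (c 18) * y ^ 2 * z + (c 19) * y * z ^ 2 + (c 7) * y + (c 8) * z) + 2 * ((c 10) * y + (c 11) * z + (c 17) * y * z + (c 4)) * x = 0 := fun x y z => by
        have e0 : (![((c 1) + (c 12) * y ^ 2 + (c 13) * z ^ 2 + (c 16) * y * z + (c 18) * y ^ 2 * z + (c 19) * y * z ^ 2 + (c 7) * y + (c 8) * z) + 2 * ((c 10) * y + (c 11) * z + (c 17) * y * z + (c 4)) * x, ((c 10) * x ^ 2 + (c 15) * z ^ 2 + (c 16) * x * z + (c 17) * x ^ 2 * z + (c 19) * x * z ^ 2 + (c 2) + (c 7) * x + (c 9) * z) + 2 * ((c 12) * x + (c 14) * z + (c 18) * x * z + (c 5)) * y, ((c 11) * x ^ 2 + (c 14) * y ^ 2 + (c 16) * x * y + (c 17) * x ^ 2 * y + (c 18) *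 x * y ^ 2 + (c 3) + (c 8) * x + (c 9) * y) + 2 * ((c 13) * x + (c 15) * y + (c 19) * x * y + (c 6)) * z] : Fin 3 → ℝ) = 0 := by
          rw [← SKgrad hc x y z, hg]
        exact congrFun e0 0
      have hg2 : ∀ x y z : ℝ, ((c 10) * x ^ 2 + (c 15) * z ^ 2 + (c 16) * x * z + (c 17) * x ^ 2 * z + (c 19) * x * z ^ 2 + (c 2) + (c 7) * x + (c 9) * z) + 2 * ((c 12) * x + (c 14) * z + (c 18) * x * z + (c 5)) * y = 0 := fun x y z => by
        have e0 : (![((c 1) + (c 12) * y ^ 2 + (c 13) * z ^ 2 + (c 16) * y * z + (c 18) * y ^ 2 * z + (c 19) * y * z ^ 2 + (c 7) * y + (c 8) * z) + 2 * ((c 10) * y + (c 11) * z + (c 17) * y * z + (c 4)) * x, ((c 10) * x ^ 2 + (c 15) * z ^ 2 + (c 16) * x * z + (c 17) * x ^ 2 * z + (c 19) * x * z ^ 2 + (c 2) + (c 7) * x + (c 9) * z) + 2 * ((c 12) * x + (c 14) * z + (c 18) * x * z + (c 5)) * y, ((c 11) * x ^ 2 + (c 14) * y ^ 2 + (c 16)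 * x * y + (c 17) * x ^ 2 * y + (c 18) * x * y ^ 2 + (c 3) + (c 8) * x + (c 9) * y) + 2 * ((c 13) * x + (c 15) * y + (c 19) * x * y + (c 6)) * z] : Fin 3 → ℝ) = 0 := by
          rw [← SKgrad hc x y z, hg]
        exact congrFun e0 1
      have hg3 : ∀ x y z : ℝ, ((c 11) * x ^ 2 + (c 14) * y ^ 2 + (c 16) * x * y + (c 17) * x ^ 2 * y + (c 18) * x * y ^ 2 + (c 3) + (c 8) * x + (c 9) * y) + 2 * ((c 13) * x + (c 15) * y + (c 19) * x * y + (c 6)) * z = 0 := fun x y z => by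
        have e0 : (![((c 1) + (c 12) * y ^ 2 + (c 13) * z ^ 2 + (c 16) * y * z + (c 18) * y ^ 2 * z + (c 19) * y * z ^ 2 + (c 7) * y + (c 8) * z) + 2 * ((c 10) * y + (c 11) * z + (c 17) * y * z + (c 4)) * x, ((c 10) * x ^ 2 + (c 15) * z ^ 2 + (c 16) * x * z + (c 17) * x ^ 2 * z + (c 19) * x * z ^ 2 + (c 2) + (c 7) * x + (c 9) * z) + 2 * ((c 12) * x + (c 14) * z + (c 18) * x * z + (c 5)) * y, ((c 11) * x ^ 2 + (c 14) * y ^ 2 + (c 16) * x * y + (c 17) * x ^ 2 * y + (c 18) * x * y ^ 2 + (c 3) + (c 8) * x + (c 9) * y) + 2 * ((c 13) * x + (c 15) * y + (c 19) * x * y + (c 6)) * z] : Fin 3 → ℝ) = 0 := by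
          rw [← SKgrad hc x y z, hg]
        exact congrFun e0 2
      have h1 : c 1 = 0 := by linear_combination (hg1 0 0 0)
      have h2 : c 2 = 0 := by linear_combination (hg2 0 0 0)
      have h3 : c 3 = 0 := by linear_combination (hg3 0 0 0)
      have h4 : c 4 = 0 := by linear_combination (-1/2) * (hg1 0 0 0) + (1/2) * (hg1 1 0 0)
      have h5 : c 5 = 0 := by linear_combination (-1/2) * (hg2 0 0 0) + (1/2) * (hg2 0 1 0)
      have h6 : c 6 = 0 := by linear_combination (-1/2) * (hg3 0 0 0) + (1/2) * (hg3 0 0 1)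
      have h7 : c 7 = 0 := by linear_combination (1/2) * (hg1 0 1 0) + (-1/2) * (hg1 0 (-1) 0)
      have h8 : c 8 = 0 := by linear_combination (1/2) * (hg1 0 0 1) + (-1/2) * (hg1 0 0 (-1))
      have h9 : c 9 = 0 := by linear_combination (1/2) * (hg2 0 0 1) + (-1/2) * (hg2 0 0 (-1))
      have h10 : c 10 = 0 := by linear_combination (1/2) * (hg1 0 0 0) + (-1/2) * (hg1 0 1 0) + (-1/2) * (hg1 1 0 0) + (1/2) * (hg1 1 1 0)
      have h11 : c 11 = 0 := by linear_combination (1/2) * (hg1 0 0 0) + (-1/2) * (hg1 0 0 1) + (-1/2) * (hg1 1 0 0) + (1/2) * (hg1 1 0 1)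
      have h12 : c 12 = 0 := by linear_combination -(hg1 0 0 0) + (1/2) * (hg1 0 1 0) + (1/2) * (hg1 0 (-1) 0)
      have h13 : c 13 = 0 := by linear_combination -(hg1 0 0 0) + (1/2) * (hg1 0 0 1) + (1/2) * (hg1 0 0 (-1))
      have h14 : c 14 = 0 := by linear_combination (1/2) * (hg2 0 0 0) + (-1/2) * (hg2 0 0 1) + (-1/2) * (hg2 0 1 0) + (1/2) * (hg2 0 1 1)
      have h15 : c 15 = 0 := by linear_combination -(hg2 0 0 0) + (1/2) * (hg2 0 0 1) + (1/2) * (hg2 0 0 (-1))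
      have h16 : c 16 = 0 := by linear_combination -(hg1 0 0 0) + (1/2) * (hg1 0 0 1) + (1/2) * (hg1 0 0 (-1)) + (1/2) * (hg1 0 1 0) + (-1/2) * (hg1 0 1 (-1)) + (1/2) * (hg1 0 (-1) 0) + (-1/2) * (hg1 0 (-1) 1)
      have h17 : c 17 = 0 := by linear_combination (-1/2) * (hg1 0 0 0) + (1/2) * (hg1 0 0 1) + (1/2) * (hg1 0 1 0) + (-1/2) * (hg1 0 1 1) + (1/2) * (hg1 1 0 0) + (-1/2) * (hg1 1 0 1) + (-1/2) * (hg1 1 1 0) + (1/2) * (hg1 1 1 1)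
      have h18 : c 18 = 0 := by linear_combination (hg1 0 0 0) - (hg1 0 0 1) + (-1/2) * (hg1 0 1 0) + (1/2) * (hg1 0 1 1) + (-1/2) * (hg1 0 (-1) 0) + (1/2) * (hg1 0 (-1) 1)
      have h19 : c 19 = 0 := by linear_combination (hg1 0 0 0) + (-1/2) * (hg1 0 0 1) + (-1/2) * (hg1 0 0 (-1)) - (hg1 0 1 0) + (1/2) * (hg1 0 1 1) + (1/2) * (hg1 0 1 (-1))
      refine ⟨c 0, funext fun x => funext fun y => funext fun z => ?_⟩
      show s x y z = c 0
      rw [hc]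
      linear_combination x * (h1) + y * (h2) + z * (h3) + x ^ 2 * (h4) + y ^ 2 * (h5) + z ^ 2 * (h6) + x * y * (h7) + x * z * (h8) + y * z * (h9) + x ^ 2 * y * (h10) + x ^ 2 * z * (h11) + x * y ^ 2 * (h12) + x * z ^ 2 * (h13) + y ^ 2 * z * (h14) + y * z ^ 2 * (h15) + x * y * z * (h16) + x ^ 2 * y * z * (h17) + x * y ^ 2 * z * (h18) + x * y * z ^ 2 * (h19)
    · rintro ⟨k, rfl⟩
      have hsk : ∀ x y z : ℝ, (fun _ _ _ : ℝ => k) x y z = k + 0 * x + 0 * y + 0 * z + 0 * x ^ 2 + 0 * y ^ 2 + 0 * z ^ 2 + 0 * x * y + 0 * x * z + 0 * y * z + 0 * x ^ 2 * y + 0 * x ^ 2 * z + 0 * x * y ^ 2 + 0 * x * z ^ 2 + 0 * y ^ 2 * z + 0 * y * z ^ 2 + 0 * x * y * z + 0 * x ^ 2 * y * z + 0 * x * y ^ 2 * z + 0 * x * y * z ^ 2 :=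
        fun x y z => by show (k:ℝ) = k + 0 * x + 0 * y + 0 * z + 0 * x ^ 2 + 0 * y ^ 2 + 0 * z ^ 2 + 0 * x * y + 0 * x * z + 0 * y * z + 0 * x ^ 2 * y + 0 * x ^ 2 * z + 0 * x * y ^ 2 + 0 * x * z ^ 2 + 0 * y ^ 2 * z + 0 * y * z ^ 2 + 0 * x * y * z + 0 * x ^ 2 * y * z + 0 * x * y ^ 2 * z + 0 * x * y * z ^ 2; ring
      refine ⟨⟨![k,0,0,0,0,0,0,0,0,0,0,0,0,0,0,0,0,0,0,0], hsk⟩, ?_⟩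
      funext x y z
      rw [SKgrad hsk x y z]
      funext i; fin_cases i
      · show ((0 + 0 * y ^ 2 + 0 * z ^ 2 + 0 * y * z + 0 * y ^ 2 * z + 0 * y * z ^ 2 + 0 * y + 0 * z) + 2 * (0 * y + 0 * z + 0 * y * z + 0) * x) = (0:ℝ); ring
      · show ((0 * x ^ 2 + 0 * z ^ 2 + 0 * x * z + 0 * x ^ 2 * z + 0 * x * z ^ 2 + 0 + 0 * x + 0 * z) + 2 * (0 * x + 0 * z + 0 * x * z + 0) * y) = (0:ℝ); ring
      · show ((0 * x ^ 2 + 0 * y ^ 2 + 0 * x * y + 0 * x ^ 2 * y + 0 * x * y ^ 2 + 0 + 0 * x + 0 * y) + 2 * (0 * x + 0 * y + 0 * x * y + 0) * z) = (0:ℝ); ring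
  · ext u
    simp only [Set.mem_setOf_eq, Set.mem_sep_iff, SK3, UK]
    constructor
    · rintro ⟨s, ⟨c, hc⟩, rfl⟩
      have hu2 : ∀ x y z : ℝ, grad3 s x y z = ![((c 1)) + (2 * (c 4)) * x + ((c 7)) * y + ((c 8)) * z + (2 * (c 10)) * x * y + (2 * (c 11)) * x * z + ((c 16)) * y * z + (2 * (c 17)) * x * y * z + ((c 18)) * y ^ 2 * z + ((c 19)) * y * z ^ 2 + ((c 12)) * y ^ 2 + ((c 13)) * z ^ 2, ((c 2)) + ((c 7)) * x + (2 * (c 5)) * y + ((c 9)) * z + (2 * (c 12)) * x * y + ((c 16)) * x * z + (2 * (c 14)) * y * z + (2 * (c 18)) * x * y * z + ((c 17)) * x ^ 2 * z + ((c 19)) * x * z ^ 2 + ((c 10)) * x ^ 2 + ((c 15)) * z ^ 2, ((c 3)) + ((c 8)) * x + ((c 9)) * y + (2 * (c 6)) * z + ((c 16)) * x * y + (2 * (c 13)) * x * z + (2 * (c 15)) * y * z + (2 * (c 19)) * x * y * z + ((c 17)) * x ^ 2 * y + ((c 18)) * x * y ^ 2 + ((c 11)) * x ^ 2 + ((c 14))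 * y ^ 2] := fun x y z => by
        rw [SKgrad hc x y z]
        funext i; fin_cases i
        · show (((c 1) + (c 12) * y ^ 2 + (c 13) * z ^ 2 + (c 16) * y * z + (c 18) * y ^ 2 * z + (c 19) * y * z ^ 2 + (c 7) * y + (c 8) * z) + 2 * ((c 10) * y + (c 11) * z + (c 17) * y * z + (c 4)) * x) = (((c 1)) + (2 * (c 4)) * x + ((c 7)) * y + ((c 8)) * z + (2 * (c 10)) * x * y + (2 * (c 11)) * x * z + ((c 16)) * y * z + (2 * (c 17)) * x * y * z + ((c 18)) * y ^ 2 * z + ((c 19)) * y * z ^ 2 + ((c 12)) * y ^ 2 + ((c 13)) * z ^ 2); ring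
        · show (((c 10) * x ^ 2 + (c 15) * z ^ 2 + (c 16) * x * z + (c 17) * x ^ 2 * z + (c 19) * x * z ^ 2 + (c 2) + (c 7) * x + (c 9) * z) + 2 * ((c 12) * x + (c 14) * z + (c 18) * x * z + (c 5)) * y) = (((c 2)) + ((c 7)) * x + (2 * (c 5)) * y + ((c 9)) * z + (2 * (c 12)) * x * y + ((c 16)) * x * z + (2 * (c 14)) * y * z + (2 * (c 18)) * x * y * z + ((c 17)) * x ^ 2 * z + ((c 19)) * x * z ^ 2 + ((c 10)) * x ^ 2 + ((c 15)) * z ^ 2); ring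
        · show (((c 11) * x ^ 2 + (c 14) * y ^ 2 + (c 16) * x * y + (c 17) * x ^ 2 * y + (c 18) * x * y ^ 2 + (c 3) + (c 8) * x + (c 9) * y) + 2 * ((c 13) * x + (c 15) * y + (c 19) * x * y + (c 6)) * z) = (((c 3)) + ((c 8)) * x + ((c 9)) * y + (2 * (c 6)) * z + ((c 16)) * x * y + (2 * (c 13)) * x * z + (2 * (c 15)) * y * z + (2 * (c 19)) * x * y * z + ((c 17)) * x ^ 2 * y + ((c 18)) * x * y ^ 2 + ((c 11)) * x ^ 2 + ((c 14)) * y ^ 2); ring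
      refine ⟨⟨![![c 1, 2 * c 4, c 7, c 8, 2 * c 10, 2 * c 11, c 16, 2 * c 17], ![c 2, c 7, 2 * c 5, c 9, 2 * c 12, c 16, 2 * c 14, 2 * c 18], ![c 3, c 8, c 9, 2 * c 6, c 16, 2 * c 13, 2 * c 15, 2 * c 19]], c 18, c 19, c 12, c 13, c 17, c 19, c 10, c 15, c 17, c 18, c 11, c 14, hu2⟩, ?_⟩
      funext x y z
      rw [UKcurl hu2 x y z]
      funext i; fin_cases i
      · show (((((c 9)) + ((c 16)) * x + (2 * (c 15)) * z + (2 * (c 19)) * x * z + ((c 17)) * x ^ 2) + 2 * (((c 18)) * x + ((c 14))) * y) - ((((c 9)) + ((c 16)) * x + (2 * (c 14)) * y + (2 * (c 18)) * x * y + ((c 17)) * x ^ 2) + 2 * (((c 19)) * x + ((c 15))) * z)) = (0:ℝ); ring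
      · show (((((c 18)) * y ^ 2 + ((c 8)) + (2 * (c 11)) * x + ((c 16)) * y + (2 * (c 17)) * x * y) + 2 * (((c 19)) * y + ((c 13))) * z) - ((((c 8)) + ((c 16)) * y + (2 * (c 13)) * z + (2 * (c 19)) * y * z + ((c 18)) * y ^ 2) + 2 * (((c 17)) * y + ((c 11))) * x)) = (0:ℝ); ring
      · show (((((c 7)) + (2 * (c 12)) * y + ((c 16)) * z + (2 * (c 18)) * y * z + ((c 19)) * z ^ 2) + 2 * (((c 17)) * z + ((c 10))) * x) - ((((c 19)) * z ^ 2 + ((c 7)) + (2 * (c 10)) * x + ((c 16)) * z + (2 * (c 17)) * x * z) + 2 * (((c 18)) * z + ((c 12))) * y)) = (0:ℝ); ring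
    · rintro ⟨⟨b, α1, α2, α3, α4, β1, β2, β3, β4, γ1, γ2, γ3, γ4, hu⟩, hcu⟩
      have hK1 : ∀ x y z : ℝ, (((b 2 2) + (b 2 4) * x + (b 2 6) * z + (b 2 7) * x * z + γ1 * x ^ 2) + 2 * (γ2 * x + γ4) * y) - (((b 1 3) + (b 1 5) * x + (b 1 6) * y + (b 1 7) * x * y + β1 * x ^ 2) + 2 * (β2 * x + β4) * z) = 0 := fun x y z => by
        have e0 : (![(((b 2 2) + (b 2 4) * x + (b 2 6) * z + (b 2 7) * x * z + γ1 * x ^ 2) + 2 * (γ2 * x + γ4) * y) - (((b 1 3) + (b 1 5) * x + (b 1 6) * y + (b 1 7) * x * y + β1 * x ^ 2) + 2 * (β2 * x + β4) * z), ((α1 * y ^ 2 + (b 0 3) + (b 0 5) * x + (b 0 6) * y + (b 0 7) * x * y) + 2 * (α2 * y + α4) * z) - (((b 2 1) + (b 2 4) * y + (b 2 5) * z + (b 2 7) * y * z + γ2 * y ^ 2) + 2 * (γ1 * y + γ3) * x), (((b 1 1) + (b 1 4) * y + (b 1 5) * z + (b 1 7) * y * z + β2 * z ^ 2) + 2 *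 (β1 * z + β3) * x) - ((α2 * z ^ 2 + (b 0 2) + (b 0 4) * x + (b 0 6) * z + (b 0 7) * x * z) + 2 * (α1 * z + α3) * y)] : Fin 3 → ℝ) = 0 := by
          rw [← UKcurl hu x y z, hcu]
        exact congrFun e0 0
      have hK2 : ∀ x y z : ℝ, ((α1 * y ^ 2 + (b 0 3) + (b 0 5) * x + (b 0 6) * y + (b 0 7) * x * y) + 2 * (α2 * y + α4) * z) - (((b 2 1) + (b 2 4) * y + (b 2 5) * z + (b 2 7) * y * z + γ2 * y ^ 2) + 2 * (γ1 * y + γ3) * x) = 0 := fun x y z => by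
        have e0 : (![(((b 2 2) + (b 2 4) * x + (b 2 6) * z + (b 2 7) * x * z + γ1 * x ^ 2) + 2 * (γ2 * x + γ4) * y) - (((b 1 3) + (b 1 5) * x + (b 1 6) * y + (b 1 7) * x * y + β1 * x ^ 2) + 2 * (β2 * x + β4) * z), ((α1 * y ^ 2 + (b 0 3) + (b 0 5) * x + (b 0 6) * y + (b 0 7) * x * y) + 2 * (α2 * y + α4) * z) - (((b 2 1) + (b 2 4) * y + (b 2 5) * z + (b 2 7) * y * z + γ2 * y ^ 2) + 2 * (γ1 * y + γ3) * x), (((b 1 1) + (b 1 4) * y + (b 1 5) * z + (b 1 7) * y * z + β2 * z ^ 2) + 2 * (β1 * z + β3) * x) - ((α2 * z ^ 2 + (b 0 2) + (b 0 4) * x + (b 0 6) * z + (b 0 7) * x * z) + 2 * (α1 * z + α3) * y)] : Fin 3 → ℝ) = 0 := by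
          rw [← UKcurl hu x y z, hcu]
        exact congrFun e0 1
      have hK3 : ∀ x y z : ℝ, (((b 1 1) + (b 1 4) * y + (b 1 5) * z + (b 1 7) * y * z + β2 * z ^ 2) + 2 * (β1 * z + β3) * x) - ((α2 * z ^ 2 + (b 0 2) + (b 0 4) * x + (b 0 6) * z + (b 0 7) * x * z) + 2 * (α1 * z + α3) * y) = 0 := fun x y z => by
        have e0 : (![(((b 2 2) + (b 2 4) * x + (b 2 6) * z + (b 2 7) * x * z + γ1 * x ^ 2) + 2 * (γ2 * x + γ4) * y) - (((b 1 3) + (b 1 5) * x + (b 1 6) * y + (b 1 7) * x * y + β1 * x ^ 2) + 2 * (β2 * x + β4) * z), ((α1 * y ^ 2 + (b 0 3) + (b 0 5) * x + (b 0 6) * y + (b 0 7) * x * y) + 2 * (α2 * y + α4) * z) - (((b 2 1) + (b 2 4) * y + (b 2 5) * z + (b 2 7) * y * z + γ2 * y ^ 2) + 2 * (γ1 * y + γ3) * x), (((b 1 1) + (b 1 4) * y + (b 1 5) * z + (b 1 7) * y * z + β2 * z ^ 2) + 2 * (β1 * z + β3) * x) - ((α2 * z ^ 2 + (b 0 2)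 + (b 0 4) * x + (b 0 6) * z + (b 0 7) * x * z) + 2 * (α1 * z + α3) * y)] : Fin 3 → ℝ) = 0 := by
          rw [← UKcurl hu x y z, hcu]
        exact congrFun e0 2
      have r1 : (b 2 2) = (b 1 3) := by linear_combination (hK1 0 0 0)
      have r2 : (b 2 4) = (b 1 5) := by linear_combination (1/2) * (hK1 1 0 0) + (-1/2) * (hK1 (-1) 0 0)
      have r3 : 2 * γ4 = (b 1 6) := by linear_combination -(hK1 0 0 0) + (hK1 0 1 0)
      have r4 : (b 2 6) = 2 * β4 := by linear_combination -(hK1 0 0 0) + (hK1 0 0 1)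
      have r5 : 2 * γ2 = (b 1 7) := by linear_combination (hK1 0 0 0) - (hK1 0 1 0) - (hK1 1 0 0) + (hK1 1 1 0)
      have r6 : γ1 = β1 := by linear_combination -(hK1 0 0 0) + (1/2) * (hK1 1 0 0) + (1/2) * (hK1 (-1) 0 0)
      have r7 : (b 2 7) = 2 * β2 := by linear_combination (hK1 0 0 0) - (hK1 0 0 1) - (hK1 1 0 0) + (hK1 1 0 1)
      have s1 : (b 0 3) = (b 2 1) := by linear_combination (hK2 0 0 0)
      have s2 : (b 0 5) = 2 * γ3 := by linear_combination -(hK2 0 0 0) + (hK2 1 0 0)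
      have s3 : (b 0 6) = (b 2 4) := by linear_combination (1/2) * (hK2 0 1 0) + (-1/2) * (hK2 0 (-1) 0)
      have s4 : 2 * α4 = (b 2 5) := by linear_combination -(hK2 0 0 0) + (hK2 0 0 1)
      have s5 : (b 0 7) = 2 * γ1 := by linear_combination (hK2 0 0 0) - (hK2 0 1 0) - (hK2 1 0 0) + (hK2 1 1 0)
      have s6 : α1 = γ2 := by linear_combination -(hK2 0 0 0) + (1/2) * (hK2 0 1 0) + (1/2) * (hK2 0 (-1) 0)
      have s7 : 2 * α2 = (b 2 7) := by linear_combination (hK2 0 0 0) - (hK2 0 0 1) - (hK2 0 1 0) + (hK2 0 1 1)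
      have t1 : (b 1 1) = (b 0 2) := by linear_combination (hK3 0 0 0)
      have t2 : 2 * β3 = (b 0 4) := by linear_combination -(hK3 0 0 0) + (hK3 1 0 0)
      have t3 : (b 1 4) = 2 * α3 := by linear_combination -(hK3 0 0 0) + (hK3 0 1 0)
      have t4 : (b 1 5) = (b 0 6) := by linear_combination (-1/2) * (hK1 1 0 0) + (1/2) * (hK1 (-1) 0 0) + (-1/2) * (hK2 0 1 0) + (1/2) * (hK2 0 (-1) 0)
      have t5 : 2 * β1 = (b 0 7) := by linear_combination 2 * (hK1 0 0 0) - (hK1 1 0 0) - (hK1 (-1) 0 0) - (hK2 0 0 0) + (hK2 0 1 0) + (hK2 1 0 0) - (hK2 1 1 0)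
      have t6 : β2 = α2 := by linear_combination (-1/2) * (hK1 0 0 0) + (1/2) * (hK1 0 0 1) + (1/2) * (hK1 1 0 0) + (-1/2) * (hK1 1 0 1) + (-1/2) * (hK2 0 0 0) + (1/2) * (hK2 0 0 1) + (1/2) * (hK2 0 1 0) + (-1/2) * (hK2 0 1 1)
      have t7 : (b 1 7) = 2 * α1 := by linear_combination -(hK1 0 0 0) + (hK1 0 1 0) + (hK1 1 0 0) - (hK1 1 1 0) + 2 * (hK2 0 0 0) - (hK2 0 1 0) - (hK2 0 (-1) 0)
      have hs0 : ∀ x y z : ℝ, (fun x y z : ℝ => 0 + ((b 0 0)) * x + ((b 1 0)) * y + ((b 2 0)) * z + ((1/2) * (b 0 1)) * x ^ 2 + ((1/2) * (b 1 2)) * y ^ 2 + ((1/2) * (b 2 3)) * z ^ 2 + ((b 0 2)) * x * y + ((b 0 3)) * x * z + ((b 1 3)) * y * z + ((1/2) * (b 0 4)) * x ^ 2 * y + ((1/2) * (b 0 5)) * x ^ 2 * z + α3 * x * y ^ 2 + α4 * x * z ^ 2 + ((1/2) * (b 1 6)) * y ^ 2 * z + ((1/2) * (b 2 6)) * y * z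 ^ 2 + ((b 0 6)) * x * y * z + ((1/2) * (b 0 7)) * x ^ 2 * y * z + α1 * x * y ^ 2 * z + α2 * x * y * z ^ 2) x y z = 0 + ((b 0 0)) * x + ((b 1 0)) * y + ((b 2 0)) * z + ((1/2) * (b 0 1)) * x ^ 2 + ((1/2) * (b 1 2)) * y ^ 2 + ((1/2) * (b 2 3)) * z ^ 2 + ((b 0 2)) * x * y + ((b 0 3)) * x * z + ((b 1 3)) * y * z + ((1/2) * (b 0 4)) * x ^ 2 * y + ((1/2) * (b 0 5)) * x ^ 2 * z + α3 * x * y ^ 2 + α4 * x * z ^ 2 + ((1/2) * (b 1 6)) * y ^ 2 * z + ((1/2) * (b 2 6)) * y * z ^ 2 + ((b 0 6)) * x * y * z + ((1/2) * (b 0 7)) * x ^ 2 * y * z + α1 * x * y ^ 2 * z + α2 * x * y * z ^ 2 := fun _ _ _ => rfl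
      refine ⟨fun x y z : ℝ => 0 + ((b 0 0)) * x + ((b 1 0)) * y + ((b 2 0)) * z + ((1/2) * (b 0 1)) * x ^ 2 + ((1/2) * (b 1 2)) * y ^ 2 + ((1/2) * (b 2 3)) * z ^ 2 + ((b 0 2)) * x * y + ((b 0 3)) * x * z + ((b 1 3)) * y * z + ((1/2) * (b 0 4)) * x ^ 2 * y + ((1/2) * (b 0 5)) * x ^ 2 * z + α3 * x * y ^ 2 + α4 * x * z ^ 2 + ((1/2) * (b 1 6)) * y ^ 2 * z + ((1/2) * (b 2 6)) * y * z ^ 2 + ((b 0 6)) * x * y * z + ((1/2) * (b 0 7)) * x ^ 2 * y * z + α1 * x * y ^ 2 * z + α2 * x * y * z ^ 2, ⟨![0, (b 0 0), (b 1 0), (b 2 0), (1/2) * (b 0 1), (1/2) * (b 1 2), (1/2) * (b 2 3), (b 0 2), (b 0 3), (b 1 3), (1/2) * (b 0 4), (1/2) * (b 0 5), α3, α4, (1/2) * (b 1 6), (1/2) * (b 2 6), (b 0 6), (1/2) * (b 0 7), α1, α2], hs0⟩, ?_⟩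
      funext x y z
      rw [hu x y z, SKgrad hs0 x y z]
      funext i; fin_cases i
      · show ((b 0 0) + (b 0 1) * x + (b 0 2) * y + (b 0 3) * z + (b 0 4) * x * y + (b 0 5) * x * z + (b 0 6) * y * z + (b 0 7) * x * y * z + α1 * y ^ 2 * z + α2 * y * z ^ 2 + α3 * y ^ 2 + α4 * z ^ 2) = ((((b 0 0)) + α3 * y ^ 2 + α4 * z ^ 2 + ((b 0 6)) * y * z + α1 * y ^ 2 * z + α2 * y * z ^ 2 + ((b 0 2)) * y + ((b 0 3)) * z) + 2 * (((1/2) * (b 0 4)) * y + ((1/2) * (b 0 5)) * z + ((1/2) * (b 0 7)) * y * z + ((1/2) * (b 0 1))) * x)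
        linear_combination
      · show ((b 1 0) + (b 1 1) * x + (b 1 2) * y + (b 1 3) * z + (b 1 4) * x * y + (b 1 5) * x * z + (b 1 6) * y * z + (b 1 7) * x * y * z + β1 * x ^ 2 * z + β2 * x * z ^ 2 + β3 * x ^ 2 + β4 * z ^ 2) = ((((1/2) * (b 0 4)) * x ^ 2 + ((1/2) * (b 2 6)) * z ^ 2 + ((b 0 6)) * x * z + ((1/2) * (b 0 7)) * x ^ 2 * z + α2 * x * z ^ 2 + ((b 1 0)) + ((b 0 2)) * x + ((b 1 3)) * z) + 2 * (α3 * x + ((1/2) * (b 1 6)) * z + α1 * x * z + ((1/2) * (b 1 2))) * y)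
        linear_combination -x * z * (r2) + (-1/2) * z ^ 2 * (r4) - x * y * z * (r5) - x ^ 2 * z * (r6) + (-1/2) * x * z ^ 2 * (r7) - x * z * (s3) + (-1/2) * x ^ 2 * z * (s5) - 2 * x * y * z * (s6) + (-1/2) * x * z ^ 2 * (s7) + x * (t1) + (1/2) * x ^ 2 * (t2) + x * y * (t3)
      · show ((b 2 0) + (b 2 1) * x + (b 2 2) * y + (b 2 3) * z + (b 2 4) * x * y + (b 2 5) * x * z + (b 2 6) * y * z + (b 2 7) * x * y * z + γ1 * x ^ 2 * y + γ2 * x * y ^ 2 + γ3 * x ^ 2 + γ4 * y ^ 2) = ((((1/2) * (b 0 5)) * x ^ 2 + ((1/2) * (b 1 6)) * y ^ 2 + ((b 0 6)) * x * y + ((1/2) * (b 0 7)) * x ^ 2 * y + α1 * x * y ^ 2 + ((b 2 0)) + ((b 0 3)) * x + ((b 1 3)) * y) + 2 * (α4 * x + ((1/2) * (b 2 6)) * y + α2 * x * y + ((1/2) * (b 2 3))) * z)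
        linear_combination y * (r1) + (1/2) * y ^ 2 * (r3) - x * (s1) + (-1/2) * x ^ 2 * (s2) - x * y * (s3) - x * z * (s4) + (-1/2) * x ^ 2 * y * (s5) - x * y ^ 2 * (s6) - x * y * z * (s7)
  · ext w
    simp only [Set.mem_setOf_eq, Set.mem_sep_iff, UK, BDM13]
    constructor
    · rintro ⟨u, ⟨b, α1, α2, α3, α4, β1, β2, β3, β4, γ1, γ2, γ3, γ4, hu⟩, rfl⟩
      have hq : ∀ x y z : ℝ, curl3 u x y z = ![(-(b 1 3) + (b 2 2)) + (-(b 1 5) + (b 2 4)) * x + (-(b 1 6) + 2 * γ4) * y + ((b 2 6) - 2 * β4) * z + (-(1/2) * (b 1 7) + γ2) * (2 * x * y) + (-(1/2) * (b 0 7) + γ1) * x ^ 2 - (-(1/2) * (b 2 7) + β2) * (2 * x * z) - (-(1/2) * (b 0 7) + β1) * x ^ 2, ((b 0 3) - (b 2 1)) + ((b 0 5) - 2 * γ3) * x + ((b 0 6) - (b 2 4)) * y + (2 * α4 - (b 2 5)) * z - (-(1/2) * (b 1 7) + γ2) * y ^ 2 - (-(1/2) * (b 0 7) + γ1) * (2 *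 x * y) + (α1 - (1/2) * (b 1 7)) * y ^ 2 + (α2 - (1/2) * (b 2 7)) * (2 * y * z), (-(b 0 2) + (b 1 1)) + (-(b 0 4) + 2 * β3) * x + (-2 * α3 + (b 1 4)) * y + (-(b 0 6) + (b 1 5)) * z - (α1 - (1/2) * (b 1 7)) * (2 * y * z) - (α2 - (1/2) * (b 2 7)) * z ^ 2 + (-(1/2) * (b 2 7) + β2) * z ^ 2 + (-(1/2) * (b 0 7) + β1) * (2 * x * z)] := fun x y z => by
        rw [UKcurl hu x y z]
        funext i; fin_cases i
        · show ((((b 2 2) + (b 2 4) * x + (b 2 6) * z + (b 2 7) * x * z + γ1 * x ^ 2) + 2 * (γ2 * x + γ4) * y) - (((b 1 3) + (b 1 5) * x + (b 1 6) * y + (b 1 7) * x * y + β1 * x ^ 2) + 2 * (β2 * x + β4) * z)) = ((-(b 1 3) + (b 2 2)) + (-(b 1 5) + (b 2 4)) * x + (-(b 1 6) + 2 * γ4) * y + ((b 2 6) - 2 * β4) * z + (-(1/2) * (b 1 7) + γ2) * (2 * x * y) + (-(1/2) * (b 0 7) + γ1) * x ^ 2 - (-(1/2) * (b 2 7) + β2)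 * (2 * x * z) - (-(1/2) * (b 0 7) + β1) * x ^ 2); ring
        · show (((α1 * y ^ 2 + (b 0 3) + (b 0 5) * x + (b 0 6) * y + (b 0 7) * x * y) + 2 * (α2 * y + α4) * z) - (((b 2 1) + (b 2 4) * y + (b 2 5) * z + (b 2 7) * y * z + γ2 * y ^ 2) + 2 * (γ1 * y + γ3) * x)) = (((b 0 3) - (b 2 1)) + ((b 0 5) - 2 * γ3) * x + ((b 0 6) - (b 2 4)) * y + (2 * α4 - (b 2 5)) * z - (-(1/2) * (b 1 7) + γ2) * y ^ 2 - (-(1/2) * (b 0 7) + γ1) * (2 * x * y) + (α1 - (1/2) * (b 1 7)) * y ^ 2 + (α2 - (1/2) * (b 2 7)) * (2 * y * z)); ring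
        · show ((((b 1 1) + (b 1 4) * y + (b 1 5) * z + (b 1 7) * y * z + β2 * z ^ 2) + 2 * (β1 * z + β3) * x) - ((α2 * z ^ 2 + (b 0 2) + (b 0 4) * x + (b 0 6) * z + (b 0 7) * x * z) + 2 * (α1 * z + α3) * y)) = ((-(b 0 2) + (b 1 1)) + (-(b 0 4) + 2 * β3) * x + (-2 * α3 + (b 1 4)) * y + (-(b 0 6) + (b 1 5)) * z - (α1 - (1/2) * (b 1 7)) * (2 * y * z) - (α2 - (1/2) * (b 2 7)) * z ^ 2 + (-(1/2) * (b 2 7) + β2) * z ^ 2 + (-(1/2) * (b 0 7) + β1) * (2 * x * z)); ring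
      refine ⟨⟨![![-(b 1 3) + (b 2 2), -(b 1 5) + (b 2 4), -(b 1 6) + 2 * γ4, (b 2 6) - 2 * β4], ![(b 0 3) - (b 2 1), (b 0 5) - 2 * γ3, (b 0 6) - (b 2 4), 2 * α4 - (b 2 5)], ![-(b 0 2) + (b 1 1), -(b 0 4) + 2 * β3, -2 * α3 + (b 1 4), -(b 0 6) + (b 1 5)]], -(1/2) * (b 1 7) + γ2, -(1/2) * (b 0 7) + γ1, α1 - (1/2) * (b 1 7), α2 - (1/2) * (b 2 7), -(1/2) * (b 2 7) + β2, -(1/2) * (b 0 7) + β1, hq⟩, ?_⟩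
      funext x y z
      rw [BDMdiv hq x y z]
      show (-(b 1 5) + (b 2 4)) + ((b 0 6) - (b 2 4)) + (-(b 0 6) + (b 1 5)) = (0:ℝ)
      ring
    · rintro ⟨⟨a, c1, c2, c3, c4, c5, c6, hw⟩, hdv⟩
      have hrel : a 0 1 + a 1 2 + a 2 3 = 0 := by
        have e0 := congrFun (congrFun (congrFun hdv 0) 0) 0
        rw [BDMdiv hw 0 0 0] at e0
        exact e0
      have hu0 : ∀ x y z : ℝ, (fun x y z : ℝ => (![0 + 0 * x + 0 * y + ((a 1 0)) * z + 0 * x * y + ((a 1 1)) * x * z + ((a 0 1) + (a 1 2)) * y * z + 0 * x * y * z + c3 * y ^ 2 * z + c4 * y * z ^ 2 + 0 * y ^ 2 + ((1/2) * (a 1 3)) * z ^ 2, 0 + ((a 2 0)) * x + 0 * y + 0 * z + ((a 2 2)) * x * y + 0 * x * z + 0 * y * z + 0 * x * y * z + c6 * x ^ 2 * z + c5 * x * z ^ 2 + ((1/2) * (a 2 1)) * x ^ 2 + 0 * z ^ 2, 0 + 0 * x + ((a 0 0)) * y + 0 * z + ((a 0 1)) * x * y + 0 * x * z + ((a 0 3))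 * y * z + 0 * x * y * z + c2 * x ^ 2 * y + c1 * x * y ^ 2 + 0 * x ^ 2 + ((1/2) * (a 0 2)) * y ^ 2] : Fin 3 → ℝ)) x y z = ![0 + 0 * x + 0 * y + ((a 1 0)) * z + 0 * x * y + ((a 1 1)) * x * z + ((a 0 1) + (a 1 2)) * y * z + 0 * x * y * z + c3 * y ^ 2 * z + c4 * y * z ^ 2 + 0 * y ^ 2 + ((1/2) * (a 1 3)) * z ^ 2, 0 + ((a 2 0)) * x + 0 * y + 0 * z + ((a 2 2)) * x * y + 0 * x * z + 0 * y * z + 0 * x * y * z + c6 * x ^ 2 * z + c5 * x * z ^ 2 + ((1/2) * (a 2 1)) * x ^ 2 + 0 * z ^ 2, 0 + 0 * x + ((a 0 0)) * y + 0 * z + ((a 0 1)) * x * y + 0 * x * z + ((a 0 3)) * y * z + 0 * x * y * z + c2 * x ^ 2 * y + c1 * x * y ^ 2 + 0 * x ^ 2 + ((1/2) * (a 0 2)) * y ^ 2] := fun _ _ _ => rfl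
      refine ⟨fun x y z : ℝ => (![0 + 0 * x + 0 * y + ((a 1 0)) * z + 0 * x * y + ((a 1 1)) * x * z + ((a 0 1) + (a 1 2)) * y * z + 0 * x * y * z + c3 * y ^ 2 * z + c4 * y * z ^ 2 + 0 * y ^ 2 + ((1/2) * (a 1 3)) * z ^ 2, 0 + ((a 2 0)) * x + 0 * y + 0 * z + ((a 2 2)) * x * y + 0 * x * z + 0 * y * z + 0 * x * y * z + c6 * x ^ 2 * z + c5 * x * z ^ 2 + ((1/2) * (a 2 1)) * x ^ 2 + 0 * z ^ 2, 0 + 0 * x + ((a 0 0)) * y + 0 * z + ((a 0 1)) * x * y + 0 * x * z + ((a 0 3)) * y * z + 0 * x * y * z + c2 * x ^ 2 * y + c1 * x * y ^ 2 + 0 * x ^ 2 + ((1/2) * (a 0 2)) * y ^ 2] : Fin 3 → ℝ), ⟨![![0, 0, 0, (a 1 0), 0, (a 1 1), (a 0 1) + (a 1 2), 0], ![0, (a 2 0), 0, 0, (a 2 2), 0, 0, 0], ![0, 0, (a 0 0), 0, (a 0 1), 0, (a 0 3), 0]], c3, c4, 0, (1/2) * (a 1 3), c6, c5, (1/2) *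 (a 2 1), 0, c2, c1, 0, (1/2) * (a 0 2), hu0⟩, ?_⟩
      funext x y z
      rw [hw x y z, UKcurl hu0 x y z]
      funext i; fin_cases i
      · show ((a 0 0) + (a 0 1) * x + (a 0 2) * y + (a 0 3) * z + c1 * (2 * x * y) + c2 * x ^ 2 - c5 * (2 * x * z) - c6 * x ^ 2) = (((((a 0 0)) + ((a 0 1)) * x + ((a 0 3)) * z + 0 * x * z + c2 * x ^ 2) + 2 * (c1 * x + ((1/2) * (a 0 2))) * y) - ((0 + 0 * x + 0 * y + 0 * x * y + c6 * x ^ 2) + 2 * (c5 * x + 0) * z))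
        ring
      · show ((a 1 0) + (a 1 1) * x + (a 1 2) * y + (a 1 3) * z - c1 * y ^ 2 - c2 * (2 * x * y) + c3 * y ^ 2 + c4 * (2 * y * z)) = (((c3 * y ^ 2 + ((a 1 0)) + ((a 1 1)) * x + ((a 0 1) + (a 1 2)) * y + 0 * x * y) + 2 * (c4 * y + ((1/2) * (a 1 3))) * z) - ((0 + ((a 0 1)) * y + 0 * z + 0 * y * z + c1 * y ^ 2) + 2 * (c2 * y + 0) * x))
        ring
      · show ((a 2 0) + (a 2 1) * x + (a 2 2) * y + (a 2 3) * z - c3 * (2 * y * z) - c4 * z ^ 2 + c5 * z ^ 2 + c6 * (2 * x * z)) = (((((a 2 0)) + ((a 2 2)) * y + 0 * z + 0 * y * z + c5 * z ^ 2) + 2 * (c6 * z + ((1/2) * (a 2 1))) * x) - ((c4 * z ^ 2 + 0 + 0 * x + ((a 0 1) + (a 1 2)) * z + 0 * x * z) + 2 * (c3 * z + 0) * y))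
        linear_combination z * (hrel)
  · ext g
    simp only [Set.mem_setOf_eq, BDM13]
    constructor
    · rintro ⟨w, ⟨a, c1, c2, c3, c4, c5, c6, hw⟩, rfl⟩
      exact ⟨a 0 1 + a 1 2 + a 2 3, funext fun x => funext fun y => funext fun z => BDMdiv hw x y z⟩
    · rintro ⟨k, rfl⟩
      have hq0 : ∀ x y z : ℝ, (fun x y z : ℝ => (![0 + k * x + 0 * y + 0 * z + 0 * (2 * x * y) + 0 * x ^ 2 - 0 * (2 * x * z) - 0 * x ^ 2, 0 + 0 * x + 0 * y + 0 * z - 0 * y ^ 2 - 0 * (2 * x * y) + 0 * y ^ 2 + 0 * (2 * y * z), 0 + 0 * x + 0 * y + 0 * z - 0 * (2 * y * z) - 0 * z ^ 2 + 0 * z ^ 2 + 0 * (2 * x * z)] : Fin 3 → ℝ)) x y z = ![0 + k * x + 0 * y + 0 * z + 0 * (2 * x * y) + 0 * x ^ 2 - 0 * (2 * x * z) - 0 * x ^ 2, 0 + 0 * x + 0 * y + 0 * z - 0 * y ^ 2 - 0 * (2 * x * y) + 0 * y ^ 2 + 0 * (2 * y * z), 0 + 0 * x + 0 * y + 0 *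 z - 0 * (2 * y * z) - 0 * z ^ 2 + 0 * z ^ 2 + 0 * (2 * x * z)] := fun _ _ _ => rfl
      refine ⟨fun x y z : ℝ => (![0 + k * x + 0 * y + 0 * z + 0 * (2 * x * y) + 0 * x ^ 2 - 0 * (2 * x * z) - 0 * x ^ 2, 0 + 0 * x + 0 * y + 0 * z - 0 * y ^ 2 - 0 * (2 * x * y) + 0 * y ^ 2 + 0 * (2 * y * z), 0 + 0 * x + 0 * y + 0 * z - 0 * (2 * y * z) - 0 * z ^ 2 + 0 * z ^ 2 + 0 * (2 * x * z)] : Fin 3 → ℝ), ⟨![![0,k,0,0],![0,0,0,0],![0,0,0,0]], 0, 0, 0, 0, 0, 0, hq0⟩, ?_⟩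
      funext x y z
      rw [BDMdiv hq0 x y z]
      show (k:ℝ) = k + 0 + 0
      ring
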